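/- Fix n ≥ 1 and a, b ≥ 1, and let P_a, P_b, P_{ab} be the n×n matrices defined below. Then the matrices are multiplicative: the matrix product satisfies P_a · P_b = P_{ab}, i.e. ∑_{k=1}^{n} P_a(i,k)·P_b(k,j) = P_{ab}(i,j) for all 1 ≤ i, j ≤ n. -/

import Mathlib

/-- The transition matrix following a single card through a GSR `a`-shuffle of an `n`-card
deck: `P_a(i,j)` (with `1`-based positions `i.val+1`, `j.val+1`) is the chance that the card
at position `i` moves to position `j`. -/
def singleCardMatrix (n a : ℕ) : Matrix (Fin n) (Fin n) ℚ := fun i j =>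
  ((∑ k ∈ Finset.Icc 1 a,
      ∑ r ∈ Finset.Icc ((i.val + 1) + (j.val + 1) - (n + 1)) (min i.val j.val),
        Nat.choose j.val r * Nat.choose (n - (j.val + 1)) (i.val - r) * k ^ r *
          (a - k) ^ (j.val - r) * (k - 1) ^ (i.val - r) *
          (a - k + 1) ^ ((n - (j.val + 1)) - (i.val - r)) : ℕ) : ℚ) / (a : ℚ) ^ n

namespace GSRproof

open Finset

section Rank
variable {n : ℕ} {L : Type*} [LinearOrder L]

/-- rank of position `i` among the values of `T` -/
def rankOf (T : Fin n → L) (i : Fin n) : ℕ :=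
  (univ.filter fun m => T m < T i).card

lemma rankOf_lt (T : Fin n → L) (i : Fin n) : rankOf T i < n := by
  have h : (univ.filter fun m => T m < T i) ⊆ univ.erase i := by
    intro m hm
    simp only [mem_filter, mem_univ, true_and] at hm
    exact mem_erase.2 ⟨fun he => absurd hm (by simp [he]), mem_univ m⟩
  calc rankOf T i ≤ (univ.erase i).card := card_le_card h
    _ < (univ : Finset (Fin n)).card := card_erase_lt_of_mem (mem_univ i)
    _ = n := by simp

lemma rankOf_lt_rankOf {T : Fin n → L} {m i : Fin n} (h : T m < T i) :
    rankOf T m < rankOf T i := by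
  apply card_lt_card
  have hsub : (univ.filter fun x => T x < T m) ⊆ (univ.filter fun x => T x < T i) := by
    intro x hx
    simp only [mem_filter, mem_univ, true_and] at *
    exact lt_trans hx h
  refine (Finset.ssubset_iff_of_subset hsub).2 ⟨m, ?_, ?_⟩
  · simp [h]
  · simp

lemma rankOf_lt_iff {T : Fin n → L} (hT : Function.Injective T) {m i : Fin n} :
    rankOf T m < rankOf T i ↔ T m < T i := by
  constructor
  · intro h
    rcases lt_trichotomy (T m) (T i) with h'|h'|h'
    · exact h'
    · exact absurd (hT h') (by rintro rfl; exact lt_irrefl _ h)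
    · exact absurd (rankOf_lt_rankOf h') (by omega)
  · exact rankOf_lt_rankOf

lemma rankOf_injective {T : Fin n → L} (hT : Function.Injective T) :
    Function.Injective (rankOf T) := by
  intro m i h
  rcases lt_trichotomy (T m) (T i) with h'|h'|h'
  · exact absurd (rankOf_lt_rankOf h') (by omega)
  · exact hT h'
  · exact absurd (rankOf_lt_rankOf h') (by omega)

end Rank

variable {n a b : ℕ}

/-- sorting key of a GSR shuffle: sort by digit, ties broken by original position -/
def key (g : Fin n → Fin a) (i : Fin n) : Fin a ×ₗ Fin n := toLex (g i, i)

lemma key_injective (g : Fin n → Fin a) : Function.Injective (key g) := by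
  intro m i h
  have := congrArg (fun x => (ofLex x).2) h
  simpa [key] using this

lemma key_lt_iff (g : Fin n → Fin a) (m i : Fin n) :
    key g m < key g i ↔ (g m < g i ∨ (g m = g i ∧ m < i)) := by
  simp [key, Prod.Lex.lt_iff]

/-- position of card `i` after the stable sort by `g` -/
def spos (g : Fin n → Fin a) (i : Fin n) : ℕ := rankOf (key g) i

lemma spos_lt (g : Fin n → Fin a) (i : Fin n) : spos g i < n := rankOf_lt _ _

lemma spos_eq (g : Fin n → Fin a) (s : Fin n) :
    spos g s = (univ.filter fun m => g m < g s ∨ (g m = g s ∧ m < s)).card := by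
  unfold spos rankOf
  congr 1
  apply filter_congr
  intro m _
  simp [key_lt_iff]

/-- the permutation induced by the stable sort -/
def sig (g : Fin n → Fin a) (i : Fin n) : Fin n := ⟨spos g i, spos_lt g i⟩

lemma sig_injective (g : Fin n → Fin a) : Function.Injective (sig g) := by
  intro m i h
  exact rankOf_injective (key_injective g) (by simpa [sig, Fin.ext_iff, spos] using h)

lemma sig_bijective (g : Fin n → Fin a) : Function.Bijective (sig g) :=
  (Finite.injective_iff_bijective).1 (sig_injective g)

lemma sig_lt_iff (g : Fin n → Fin a) (m i : Fin n) :
    sig g m < sig g i ↔ key g m < key g i := by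
  rw [show (sig g m < sig g i) ↔ (spos g m < spos g i) from Iff.rfl]
  exact rankOf_lt_iff (key_injective g)

lemma digit_lt_iff {a h1 h2 g1 g2 : ℕ} (hg1 : g1 < a) (hg2 : g2 < a) :
    h1 * a + g1 < h2 * a + g2 ↔ h1 < h2 ∨ (h1 = h2 ∧ g1 < g2) := by
  constructor
  · intro h
    rcases lt_trichotomy h1 h2 with hlt|heq|hgt
    · exact Or.inl hlt
    · subst heq
      exact Or.inr ⟨rfl, Nat.lt_of_add_lt_add_left h⟩
    · exfalso
      have h3 : (h2 + 1) * a ≤ h1 * a := Nat.mul_le_mul_right a hgt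
      rw [add_mul, one_mul] at h3
      linarith
  · rintro (hlt|⟨rfl, hlt⟩)
    · have h3 : (h1 + 1) * a ≤ h2 * a := Nat.mul_le_mul_right a hlt
      rw [add_mul, one_mul] at h3
      linarith
    · exact Nat.add_lt_add_left hlt _

lemma digit_eq_iff {a h1 h2 g1 g2 : ℕ} (hg1 : g1 < a) (hg2 : g2 < a) :
    h1 * a + g1 = h2 * a + g2 ↔ h1 = h2 ∧ g1 = g2 := by
  constructor
  · intro h
    rcases lt_trichotomy h1 h2 with hlt|heq|hgt
    · exact absurd h (Nat.ne_of_lt ((digit_lt_iff hg1 hg2).2 (Or.inl hlt)))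
    · subst heq
      exact ⟨rfl, Nat.add_left_cancel h⟩
    · exact absurd h.symm (Nat.ne_of_lt ((digit_lt_iff hg2 hg1).2 (Or.inl hgt)))
  · rintro ⟨rfl, rfl⟩; rfl

/-- combined digits of an `a`-shuffle followed by a `b`-shuffle -/
def comb (g : Fin n → Fin a) (h : Fin n → Fin b) : Fin n → Fin (a * b) := fun m =>
  ⟨(h (sig g m)).val * a + (g m).val, by
    have h1 : (h (sig g m)).val + 1 ≤ b := (h _).isLt
    have h2 : (g m).val < a := (g m).isLt
    have h3 : ((h (sig g m)).val + 1) * a ≤ b * a := Nat.mul_le_mul_right a h1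
    rw [add_mul, one_mul] at h3
    rw [mul_comm a b]
    linarith⟩

lemma comb_val (g : Fin n → Fin a) (h : Fin n → Fin b) (m : Fin n) :
    (comb g h m).val = (h (sig g m)).val * a + (g m).val := rfl

lemma key_comb_lt_iff (g : Fin n → Fin a) (h : Fin n → Fin b) (m i : Fin n) :
    key (comb g h) m < key (comb g h) i ↔ key h (sig g m) < key h (sig g i) := by
  rw [key_lt_iff, key_lt_iff]
  have H1 : (comb g h m < comb g h i) ↔
      ((h (sig g m)).val < (h (sig g i)).val ∨
        ((h (sig g m)).val = (h (sig g i)).val ∧ (g m).val < (g i).val)) := by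
    rw [Fin.lt_def]
    exact digit_lt_iff (g m).isLt (g i).isLt
  have H2 : (comb g h m = comb g h i) ↔
      ((h (sig g m)).val = (h (sig g i)).val ∧ (g m).val = (g i).val) := by
    rw [Fin.ext_iff]
    exact digit_eq_iff (g m).isLt (g i).isLt
  have H3 : (sig g m < sig g i) ↔ ((g m).val < (g i).val ∨ ((g m).val = (g i).val ∧ m < i)) := by
    rw [sig_lt_iff, key_lt_iff, Fin.lt_def, Fin.ext_iff]
  rw [H1, H2]
  rw [show (h (sig g m) < h (sig g i)) ↔ (h (sig g m)).val < (h (sig g i)).val from Fin.lt_def]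
  rw [show (h (sig g m) = h (sig g i)) ↔ (h (sig g m)).val = (h (sig g i)).val from Fin.ext_iff]
  rw [H3]
  tauto

lemma spos_comb (g : Fin n → Fin a) (h : Fin n → Fin b) (i : Fin n) :
    spos (comb g h) i = spos h (sig g i) := by
  show rankOf (key (comb g h)) i = rankOf (key h) (sig g i)
  unfold rankOf
  rw [show (univ.filter fun m => key (comb g h) m < key (comb g h) i)
      = (univ.filter fun m => key h (sig g m) < key h (sig g i)) from
    filter_congr fun m _ => by rw [key_comb_lt_iff]]
  apply Finset.card_bij (fun m _ => sig g m)
  · intro m hm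
    simp only [mem_filter, mem_univ, true_and] at *
    exact hm
  · intro m1 h1 m2 h2 he
    exact sig_injective g he
  · intro y hy
    obtain ⟨m, rfl⟩ := (sig_bijective g).2 y
    exact ⟨m, by simpa using hy, rfl⟩

/-- the number of digit functions sending card `i` to position `j` -/
def cnt (n a : ℕ) (i j : Fin n) : ℕ :=
  ((univ : Finset (Fin n → Fin a)).filter fun g => spos g i = j.val).card

theorem cnt_mul (n a b : ℕ) (ha : 0 < a) (i j : Fin n) :
    cnt n (a * b) i j = ∑ k : Fin n, cnt n a i k * cnt n b k j := by
  have step1 : ((univ : Finset ((Fin n → Fin a) × (Fin n → Fin b))).filter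
        fun p => spos p.2 (sig p.1 i) = j.val).card = cnt n (a * b) i j := by
    unfold cnt
    apply Finset.card_bij (fun p _ => comb p.1 p.2)
    · intro p hp
      simp only [mem_filter, mem_univ, true_and] at *
      rw [spos_comb]
      exact hp
    · intro p1 h1 p2 h2 he
      have hval : ∀ m, (p1.2 (sig p1.1 m)).val * a + (p1.1 m).val
          = (p2.2 (sig p2.1 m)).val * a + (p2.1 m).val := fun m => by
        rw [← comb_val, ← comb_val, he]
      have hg : p1.1 = p2.1 := funext fun m =>
        Fin.ext ((digit_eq_iff (p1.1 m).isLt (p2.1 m).isLt).1 (hval m)).2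
      have hh : p1.2 = p2.2 := by
        funext m'
        obtain ⟨m, rfl⟩ := (sig_bijective p1.1).2 m'
        have h1 := ((digit_eq_iff (p1.1 m).isLt (p2.1 m).isLt).1 (hval m)).1
        have h2 : sig p2.1 m = sig p1.1 m := by rw [hg]
        rw [h2] at h1
        exact Fin.ext h1
      exact Prod.ext hg hh
    · intro D hD
      simp only [mem_filter, mem_univ, true_and] at hD
      set g : Fin n → Fin a := fun m => ⟨(D m).val % a, Nat.mod_lt _ ha⟩ with hgdef
      set e := Equiv.ofBijective (sig g) (sig_bijective g) with hedef
      set h : Fin n → Fin b := fun m' => ⟨(D (e.symm m')).val / a,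
        Nat.div_lt_of_lt_mul (D _).isLt⟩ with hhdef
      have hcomb : comb g h = D := by
        funext m
        apply Fin.ext
        rw [comb_val]
        show (D (e.symm (sig g m))).val / a * a + (D m).val % a = (D m).val
        have hsymm : e.symm (sig g m) = m := e.symm_apply_apply m
        rw [hsymm]
        exact Nat.div_add_mod' _ a
      refine ⟨(g, h), ?_, hcomb⟩
      simp only [mem_filter, mem_univ, true_and]
      have := spos_comb g h i
      rw [hcomb] at this
      rw [← this]
      exact hD
  rw [← step1]
  rw [Finset.card_eq_sum_card_fiberwise (f := fun p => sig p.1 i) (t := univ)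
    (fun p _ => mem_univ _)]
  apply Finset.sum_congr rfl
  intro k _
  rw [filter_filter]
  have hprod : ((univ : Finset ((Fin n → Fin a) × (Fin n → Fin b))).filter
      fun p => spos p.2 (sig p.1 i) = j.val ∧ sig p.1 i = k) =
      ((univ : Finset (Fin n → Fin a)).filter fun g => spos g i = k.val) ×ˢ
      ((univ : Finset (Fin n → Fin b)).filter fun h => spos h k = j.val) := by
    ext p
    simp only [mem_filter, mem_univ, true_and, mem_product]
    constructor
    · rintro ⟨h1, h2⟩
      refine ⟨?_, ?_⟩
      · rw [show spos p.1 i = (sig p.1 i).val from rfl, h2]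
      · rw [← h2]; exact h1
    · rintro ⟨h1, h2⟩
      have hk : sig p.1 i = k := Fin.ext h1
      exact ⟨by rw [hk]; exact h2, hk⟩
  rw [hprod, Finset.card_product]
  rfl

theorem core_count (v : Fin a) (s : Fin n) (r e : ℕ) :
    ((univ : Finset (Fin n → Fin a)).filter fun g => g s = v ∧
        (univ.filter fun m => m < s ∧ g m ≤ v).card = r ∧
        (univ.filter fun m => s < m ∧ g m < v).card = e).card
      = s.val.choose r * (n - 1 - s.val).choose e * (v.val + 1) ^ r *
        (a - 1 - v.val) ^ (s.val - r) * v.val ^ e * (a - v.val) ^ (n - 1 - s.val - e) := by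
  set S1 : Finset (Fin n) := univ.filter fun m => m < s with hS1
  set S2 : Finset (Fin n) := univ.filter fun m => s < m with hS2
  have hS1card : S1.card = s.val := by
    rw [show S1 = Iio s by ext m; simp [hS1]]
    exact Fin.card_Iio s
  have hS2card : S2.card = n - 1 - s.val := by
    rw [show S2 = Ioi s by ext m; simp [hS2]]
    exact Fin.card_Ioi s
  have hfilt1 : ∀ g : Fin n → Fin a,
      (univ.filter fun m => m < s ∧ g m ≤ v) = S1.filter fun m => g m ≤ v := by
    intro g; rw [hS1, filter_filter]
  have hfilt2 : ∀ g : Fin n → Fin a,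
      (univ.filter fun m => s < m ∧ g m < v) = S2.filter fun m => g m < v := by
    intro g; rw [hS2, filter_filter]
  have hmaps : ∀ g ∈ ((univ : Finset (Fin n → Fin a)).filter fun g => g s = v ∧
        (univ.filter fun m => m < s ∧ g m ≤ v).card = r ∧
        (univ.filter fun m => s < m ∧ g m < v).card = e),
      (fun g : Fin n → Fin a => (S1.filter fun m => g m ≤ v, S2.filter fun m => g m < v)) g
        ∈ powersetCard r S1 ×ˢ powersetCard e S2 := by
    intro g hg
    simp only [mem_filter, mem_univ, true_and] at hg
    obtain ⟨-, h1, h2⟩ := hg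
    rw [mem_product, mem_powersetCard, mem_powersetCard]
    rw [hfilt1 g] at h1
    rw [hfilt2 g] at h2
    exact ⟨⟨filter_subset _ _, h1⟩, ⟨filter_subset _ _, h2⟩⟩
  -- each fiber has the same cardinality
  have hfib : ∀ R ∈ powersetCard r S1 ×ˢ powersetCard e S2,
      (((univ : Finset (Fin n → Fin a)).filter fun g => g s = v ∧
        (univ.filter fun m => m < s ∧ g m ≤ v).card = r ∧
        (univ.filter fun m => s < m ∧ g m < v).card = e).filter
        fun g => (S1.filter fun m => g m ≤ v, S2.filter fun m => g m < v) = R).card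
      = (v.val + 1) ^ r * (a - 1 - v.val) ^ (s.val - r) * v.val ^ e *
        (a - v.val) ^ (n - 1 - s.val - e) := by
    rintro ⟨R1, R2⟩ hR
    rw [mem_product, mem_powersetCard, mem_powersetCard] at hR
    obtain ⟨⟨hR1sub, hR1card⟩, hR2sub, hR2card⟩ := hR
    set A : Fin n → Finset (Fin a) := fun m =>
      if m < s then (if m ∈ R1 then Iic v else Ioi v)
      else if m = s then {v} else (if m ∈ R2 then Iio v else Ici v) with hA
    have hfibeq : (((univ : Finset (Fin n → Fin a)).filter fun g => g s = v ∧
        (univ.filter fun m => m < s ∧ g m ≤ v).card = r ∧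
        (univ.filter fun m => s < m ∧ g m < v).card = e).filter
        fun g => (S1.filter fun m => g m ≤ v, S2.filter fun m => g m < v) = (R1, R2))
        = Fintype.piFinset A := by
      ext g
      rw [filter_filter]
      simp only [mem_filter, mem_univ, true_and, Fintype.mem_piFinset, Prod.mk.injEq]
      constructor
      · rintro ⟨⟨hgs, hc1, hc2⟩, h1, h2⟩ m
        by_cases hms : m < s
        · rw [hA]
          simp only [if_pos hms]
          by_cases hmR : m ∈ R1
          · rw [if_pos hmR]
            rw [← h1] at hmR
            exact mem_Iic.2 (mem_filter.1 hmR).2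
          · rw [if_neg hmR]
            have hmS1 : m ∈ S1 := by rw [hS1]; simp [hms]
            refine mem_Ioi.2 (lt_of_not_ge fun hle => hmR ?_)
            rw [← h1]
            exact mem_filter.2 ⟨hmS1, hle⟩
        · by_cases hmeq : m = s
          · subst hmeq
            rw [hA]
            simp only [if_neg hms, if_pos rfl]
            exact mem_singleton.2 hgs
          · have hsm : s < m := lt_of_le_of_ne (le_of_not_gt hms) (Ne.symm hmeq)
            rw [hA]
            simp only [if_neg hms, if_neg hmeq]
            by_cases hmR : m ∈ R2
            · rw [if_pos hmR]
              rw [← h2] at hmR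
              exact mem_Iio.2 (mem_filter.1 hmR).2
            · rw [if_neg hmR]
              have hmS2 : m ∈ S2 := by rw [hS2]; simp [hsm]
              refine mem_Ici.2 (le_of_not_gt fun hlt => hmR ?_)
              rw [← h2]
              exact mem_filter.2 ⟨hmS2, hlt⟩
      · intro hAll
        have hgs : g s = v := by
          have := hAll s
          rw [hA] at this
          simp only [if_neg (lt_irrefl s), if_pos rfl] at this
          exact mem_singleton.1 this
        have h1 : (S1.filter fun m => g m ≤ v) = R1 := by
          ext m
          simp only [mem_filter]
          constructor
          · rintro ⟨hmS1, hle⟩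
            have hms : m < s := by rw [hS1] at hmS1; simpa using hmS1
            by_contra hmR
            have := hAll m
            rw [hA] at this
            simp only [if_pos hms, if_neg hmR] at this
            exact absurd hle (not_le.2 (mem_Ioi.1 this))
          · intro hmR
            have hmS1 : m ∈ S1 := hR1sub hmR
            have hms : m < s := by rw [hS1] at hmS1; simpa using hmS1
            have := hAll m
            rw [hA] at this
            simp only [if_pos hms, if_pos hmR] at this
            exact ⟨hmS1, mem_Iic.1 this⟩
        have h2 : (S2.filter fun m => g m < v) = R2 := by
          ext m
          simp only [mem_filter]
          constructor
          · rintro ⟨hmS2, hlt⟩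
            have hsm : s < m := by rw [hS2] at hmS2; simpa using hmS2
            have hms : ¬ m < s := by omega
            have hmne : m ≠ s := by intro h; rw [h] at hsm; exact lt_irrefl _ hsm
            by_contra hmR
            have := hAll m
            rw [hA] at this
            simp only [if_neg hms, if_neg hmne, if_neg hmR] at this
            exact absurd hlt (not_lt.2 (mem_Ici.1 this))
          · intro hmR
            have hmS2 : m ∈ S2 := hR2sub hmR
            have hsm : s < m := by rw [hS2] at hmS2; simpa using hmS2
            have hms : ¬ m < s := by omega
            have hmne : m ≠ s := by intro h; rw [h] at hsm; exact lt_irrefl _ hsm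
            have := hAll m
            rw [hA] at this
            simp only [if_neg hms, if_neg hmne, if_pos hmR] at this
            exact ⟨hmS2, mem_Iio.1 this⟩
        refine ⟨⟨hgs, ?_, ?_⟩, h1, h2⟩
        · rw [hfilt1 g, h1, hR1card]
        · rw [hfilt2 g, h2, hR2card]
    rw [hfibeq, Fintype.card_piFinset]
    -- now compute the product
    have hsplit : (univ : Finset (Fin n)) = (S1 ∪ {s}) ∪ S2 := by
      ext m
      simp only [mem_union, mem_singleton, mem_univ, true_iff, hS1, hS2, mem_filter, mem_univ,
        true_and]
      rcases lt_trichotomy m s with h|h|h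
      · exact Or.inl (Or.inl h)
      · exact Or.inl (Or.inr h)
      · exact Or.inr h
    have hd1 : Disjoint S1 ({s} : Finset (Fin n)) := by
      rw [disjoint_left]
      intro m hm hm'
      rw [mem_singleton] at hm'
      rw [hS1] at hm
      simp only [mem_filter, mem_univ, true_and] at hm
      rw [hm'] at hm
      exact lt_irrefl _ hm
    have hd2 : Disjoint (S1 ∪ {s}) S2 := by
      rw [disjoint_left]
      intro m hm hm'
      rw [hS2] at hm'
      simp only [mem_filter, mem_univ, true_and] at hm'
      rcases mem_union.1 hm with h|h
      · rw [hS1] at h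
        simp only [mem_filter, mem_univ, true_and] at h
        exact absurd (lt_trans h hm') (lt_irrefl m)
      · rw [mem_singleton] at h
        rw [h] at hm'
        exact lt_irrefl _ hm'
    rw [hsplit, prod_union hd2, prod_union hd1, prod_singleton]
    have hAs : (A s).card = 1 := by
      rw [hA]
      simp [lt_irrefl]
    -- product over S1
    have hprod1 : (∏ m ∈ S1, (A m).card) = (v.val + 1) ^ r * (a - 1 - v.val) ^ (s.val - r) := by
      have hcongr : ∀ m ∈ S1, (A m).card = if m ∈ R1 then v.val + 1 else a - 1 - v.val := by
        intro m hm
        have hms : m < s := by rw [hS1] at hm; simpa using hm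
        rw [hA]
        simp only [if_pos hms]
        by_cases hmR : m ∈ R1
        · rw [if_pos hmR, if_pos hmR, Fin.card_Iic]
        · rw [if_neg hmR, if_neg hmR, Fin.card_Ioi]
      rw [prod_congr rfl hcongr]
      rw [← prod_filter_mul_prod_filter_not S1 (fun m => m ∈ R1)]
      have e1 : S1.filter (fun m => m ∈ R1) = R1 := by
        rw [filter_mem_eq_inter, inter_eq_right.2 hR1sub]
      have e2 : S1.filter (fun m => m ∉ R1) = S1 \ R1 := (sdiff_eq_filter S1 R1).symm
      rw [e1, e2]
      rw [prod_congr rfl (fun m hm => if_pos hm),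
        prod_congr rfl (fun m (hm : m ∈ S1 \ R1) => if_neg (mem_sdiff.1 hm).2)]
      rw [prod_const, prod_const, card_sdiff_of_subset hR1sub, hR1card, hS1card]
    have hprod2 : (∏ m ∈ S2, (A m).card) = v.val ^ e * (a - v.val) ^ (n - 1 - s.val - e) := by
      have hcongr : ∀ m ∈ S2, (A m).card = if m ∈ R2 then v.val else a - v.val := by
        intro m hm
        have hsm : s < m := by rw [hS2] at hm; simpa using hm
        have hms : ¬ m < s := by omega
        have hmne : m ≠ s := by intro h; rw [h] at hsm; exact lt_irrefl _ hsm
        rw [hA]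
        simp only [if_neg hms, if_neg hmne]
        by_cases hmR : m ∈ R2
        · rw [if_pos hmR, if_pos hmR, Fin.card_Iio]
        · rw [if_neg hmR, if_neg hmR, Fin.card_Ici]
      rw [prod_congr rfl hcongr]
      rw [← prod_filter_mul_prod_filter_not S2 (fun m => m ∈ R2)]
      have e1 : S2.filter (fun m => m ∈ R2) = R2 := by
        rw [filter_mem_eq_inter, inter_eq_right.2 hR2sub]
      have e2 : S2.filter (fun m => m ∉ R2) = S2 \ R2 := (sdiff_eq_filter S2 R2).symm
      rw [e1, e2]
      rw [prod_congr rfl (fun m hm => if_pos hm),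
        prod_congr rfl (fun m (hm : m ∈ S2 \ R2) => if_neg (mem_sdiff.1 hm).2)]
      rw [prod_const, prod_const, card_sdiff_of_subset hR2sub, hR2card, hS2card]
    rw [hprod1, hprod2, hAs]
    ring
  refine Eq.trans (Finset.card_eq_sum_card_fiberwise hmaps) ?_
  refine Eq.trans (Finset.sum_congr rfl hfib) ?_
  rw [sum_const, card_product, card_powersetCard, card_powersetCard,
    hS1card, hS2card, smul_eq_mul]
  ring

theorem cnt_eq_formula (n a : ℕ) (i j : Fin n) :
    cnt n a j i = ∑ k ∈ Icc 1 a,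
      ∑ r ∈ Icc ((i.val + 1) + (j.val + 1) - (n + 1)) (min i.val j.val),
        Nat.choose j.val r * Nat.choose (n - (j.val + 1)) (i.val - r) * k ^ r *
          (a - k) ^ (j.val - r) * (k - 1) ^ (i.val - r) *
          (a - k + 1) ^ ((n - (j.val + 1)) - (i.val - r)) := by
  have hi := i.isLt
  have hj := j.isLt
  unfold cnt
  -- the inner sum as a function of the digit value t = k - 1
  set F : ℕ → ℕ := fun t =>
    ∑ r ∈ Icc ((i.val + 1) + (j.val + 1) - (n + 1)) (min i.val j.val),
      Nat.choose j.val r * Nat.choose (n - 1 - j.val) (i.val - r) * (t + 1) ^ r *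
        (a - 1 - t) ^ (j.val - r) * t ^ (i.val - r) *
        (a - t) ^ ((n - 1 - j.val) - (i.val - r)) with hF
  have main : ((univ : Finset (Fin n → Fin a)).filter fun g => spos g j = i.val).card
      = ∑ v : Fin a, F v.val := by
    have hrw : ((univ : Finset (Fin n → Fin a)).filter fun g => spos g j = i.val)
        = univ.filter fun g =>
            (univ.filter fun m => g m < g j ∨ (g m = g j ∧ m < j)).card = i.val :=
      filter_congr fun g _ => by rw [spos_eq]
    rw [hrw]
    refine Eq.trans (Finset.card_eq_sum_card_fiberwise
      (f := fun g : Fin n → Fin a => g j) (t := univ) (fun g _ => mem_univ _)) ?_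
    apply Finset.sum_congr rfl
    intro v _
    rw [filter_filter]
    -- split the count at position j
    have hsplit : ∀ g : Fin n → Fin a, g j = v →
        (univ.filter fun m => g m < g j ∨ (g m = g j ∧ m < j)).card
          = (univ.filter fun m => m < j ∧ g m ≤ v).card
            + (univ.filter fun m => j < m ∧ g m < v).card := by
      intro g hgv
      have hdisj : Disjoint (univ.filter fun m => m < j ∧ g m ≤ v)
          (univ.filter fun m => j < m ∧ g m < v) := by
        rw [disjoint_left]
        intro m h1 h2
        simp only [mem_filter, mem_univ, true_and] at h1 h2
        exact absurd (lt_trans h1.1 h2.1) (lt_irrefl m)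
      rw [← card_union_of_disjoint hdisj, ← filter_or]
      congr 1
      apply filter_congr
      intro m _
      rcases eq_or_ne m j with rfl|hne
      · simp [lt_irrefl, hgv]
      · rw [hgv]
        have hne' : m.val ≠ j.val := fun h => hne (Fin.ext h)
        simp only [Fin.lt_def, Fin.le_def, Fin.ext_iff]
        constructor
        · rintro (h|⟨h1, h2⟩)
          · omega
          · omega
        · rintro (⟨h1, h2⟩|⟨h1, h2⟩)
          · omega
          · omega
    have hstep : (univ.filter fun g : Fin n → Fin a =>
        (univ.filter fun m => g m < g j ∨ (g m = g j ∧ m < j)).card = i.val ∧ g j = v)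
        = univ.filter fun g => g j = v ∧
            (univ.filter fun m => m < j ∧ g m ≤ v).card
              + (univ.filter fun m => j < m ∧ g m < v).card = i.val := by
      apply filter_congr
      intro g _
      constructor
      · rintro ⟨hcard, hgv⟩
        exact ⟨hgv, by rw [← hsplit g hgv]; exact hcard⟩
      · rintro ⟨hgv, hsum⟩
        exact ⟨by rw [hsplit g hgv]; exact hsum, hgv⟩
    rw [hstep]
    -- fiberwise over the first count
    have hmap2 : ∀ g ∈ (univ.filter fun g : Fin n → Fin a => g j = v ∧
        (univ.filter fun m => m < j ∧ g m ≤ v).card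
          + (univ.filter fun m => j < m ∧ g m < v).card = i.val),
        (fun g : Fin n → Fin a => (univ.filter fun m => m < j ∧ g m ≤ v).card) g
          ∈ range (i.val + 1) := by
      intro g hg
      simp only [mem_filter, mem_univ, true_and] at hg
      simp only [mem_range]
      omega
    refine Eq.trans (Finset.card_eq_sum_card_fiberwise hmap2) ?_
    -- each fiber via core_count
    have hfib : ∀ r ∈ range (i.val + 1),
        ((univ.filter fun g : Fin n → Fin a => g j = v ∧
          (univ.filter fun m => m < j ∧ g m ≤ v).card
            + (univ.filter fun m => j < m ∧ g m < v).card = i.val).filter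
          fun g => (univ.filter fun m => m < j ∧ g m ≤ v).card = r).card
        = Nat.choose j.val r * Nat.choose (n - 1 - j.val) (i.val - r) * (v.val + 1) ^ r *
            (a - 1 - v.val) ^ (j.val - r) * v.val ^ (i.val - r) *
            (a - v.val) ^ ((n - 1 - j.val) - (i.val - r)) := by
      intro r hr
      rw [mem_range] at hr
      rw [filter_filter]
      have heq : (univ.filter fun g : Fin n → Fin a => (g j = v ∧
          (univ.filter fun m => m < j ∧ g m ≤ v).card
            + (univ.filter fun m => j < m ∧ g m < v).card = i.val) ∧
          (univ.filter fun m => m < j ∧ g m ≤ v).card = r)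
          = univ.filter fun g => g j = v ∧
            (univ.filter fun m => m < j ∧ g m ≤ v).card = r ∧
            (univ.filter fun m => j < m ∧ g m < v).card = i.val - r := by
        apply filter_congr
        intro g _
        constructor
        · rintro ⟨⟨h1, h2⟩, h3⟩
          exact ⟨h1, h3, by omega⟩
        · rintro ⟨h1, h2, h3⟩
          exact ⟨⟨h1, by omega⟩, h2⟩
      rw [heq, core_count]
    refine Eq.trans (Finset.sum_congr rfl hfib) ?_
    -- restrict range to the Icc appearing in the formula
    rw [hF]
    refine (Finset.sum_subset ?_ ?_).symm
    · intro r hr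
      simp only [mem_Icc] at hr
      rw [mem_range]
      omega
    · intro r hr hnot
      rw [mem_range] at hr
      simp only [mem_Icc, not_and_or, not_le] at hnot
      rcases hnot with h|h
      · have hlt : n - 1 - j.val < i.val - r := by omega
        simp [Nat.choose_eq_zero_of_lt hlt]
      · have hlt : j.val < r := by omega
        simp [Nat.choose_eq_zero_of_lt hlt]
  rw [main]
  rw [Fin.sum_univ_eq_sum_range F a]
  -- reindex t = k - 1
  refine Finset.sum_bij' (i := fun t _ => t + 1) (j := fun k _ => k - 1) ?_ ?_ ?_ ?_ ?_
  · intro t ht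
    simp only [mem_range] at ht
    simp only [mem_Icc]
    omega
  · intro k hk
    simp only [mem_Icc] at hk
    simp only [mem_range]
    omega
  · intro t ht
    show t + 1 - 1 = t
    omega
  · intro k hk
    simp only [mem_Icc] at hk
    show k - 1 + 1 = k
    omega
  · intro t ht
    rw [mem_range] at ht
    rw [hF]
    apply Finset.sum_congr rfl
    intro r hr
    have e1 : n - (j.val + 1) = n - 1 - j.val := by omega
    have e2 : a - (t + 1) = a - 1 - t := by omega
    have e3 : t + 1 - 1 = t := by omega
    have e4 : a - (t + 1) + 1 = a - t := by omega
    have e5 : a - 1 - t + 1 = a - t := by omega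
    simp only [e1, e2, e3, e4, e5]

end GSRproof

/-- The single-card transition matrices are multiplicative: `P_a · P_b = P_{ab}`. -/
theorem singleCardMatrix_mul (n a b : ℕ) (hn : 1 ≤ n) (ha : 1 ≤ a) (hb : 1 ≤ b) :
    singleCardMatrix n a * singleCardMatrix n b = singleCardMatrix n (a * b) := by
  ext i j
  rw [Matrix.mul_apply]
  unfold singleCardMatrix
  simp only [← GSRproof.cnt_eq_formula]
  have key : ∑ k : Fin n, ((GSRproof.cnt n a k i : ℚ) / (a : ℚ) ^ n) *
      ((GSRproof.cnt n b j k : ℚ) / (b : ℚ) ^ n)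
      = ((GSRproof.cnt n (a * b) j i : ℚ)) / ((a * b : ℕ) : ℚ) ^ n := by
    have hsum : ∑ k : Fin n, GSRproof.cnt n b j k * GSRproof.cnt n a k i
        = GSRproof.cnt n (a * b) j i := by
      rw [show a * b = b * a from mul_comm a b]
      exact (GSRproof.cnt_mul n b a hb j i).symm
    calc ∑ k : Fin n, ((GSRproof.cnt n a k i : ℚ) / (a : ℚ) ^ n) *
        ((GSRproof.cnt n b j k : ℚ) / (b : ℚ) ^ n)
        = ∑ k : Fin n, ((GSRproof.cnt n b j k : ℚ) * (GSRproof.cnt n a k i : ℚ))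
            / ((a : ℚ) ^ n * (b : ℚ) ^ n) := by
          apply Finset.sum_congr rfl
          intro k _
          rw [div_mul_div_comm]
          ring
      _ = (∑ k : Fin n, ((GSRproof.cnt n b j k : ℚ) * (GSRproof.cnt n a k i : ℚ)))
            / ((a : ℚ) ^ n * (b : ℚ) ^ n) := by rw [Finset.sum_div]
      _ = ((GSRproof.cnt n (a * b) j i : ℚ)) / ((a * b : ℕ) : ℚ) ^ n := by
          rw [← hsum]
          push_cast
          ring
  exact key
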